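/- arXiv:1812.08715 — 2 statements merged into one kernel-verified Lean document; each statement's English description precedes it below -/
import Mathlib

section
/- Let $B$ be a finite dimensional associative algebra over a field $F$ of characteristic zero, and let $L$ be a Lie algebra acting on $B$ by derivations. If $B$ is $L$-simple (that is, $B^2 \neq \{0\}$ and $B$ has no two-sided ideals invariant under the $L$-action other than $\{0\}$ and $B$), then $B$ is simple as an associative algebra. -/
attribute [local instance 100] LieRing.ofAssociativeRing

open LinearMap Module

lemma aux_nilpotent_of_trace_pow {F : Type*} [Field F] [CharZero F] :
    ∀ (n : ℕ) {M : Type*} [AddCommGroup M] [Module F M] [FiniteDimensional F M],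
      Module.finrank F M ≤ n → ∀ f : Module.End F M,
      (∀ k, 1 ≤ k → LinearMap.trace F M (f ^ k) = 0) → IsNilpotent f := by
  intro n
  induction n with
  | zero =>
    intro M _ _ _ hle f _
    have : Subsingleton M := by
      rw [← Module.finrank_zero_iff (R := F)]
      omega
    exact ⟨1, by ext m; exact Subsingleton.elim _ _⟩
  | succ n ih =>
    intro M _ _ _ hle f hf
    rcases Nat.eq_zero_or_pos (Module.finrank F M) with h0 | hpos
    · have : Subsingleton M := by rw [← Module.finrank_zero_iff (R := F)]; exact h0
      exact ⟨1, by ext m; exact Subsingleton.elim _ _⟩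
    -- constant coefficient of charpoly is zero
    have hc0 : f.charpoly.coeff 0 = 0 := by
      have hch : Polynomial.aeval f f.charpoly = 0 := f.aeval_self_charpoly
      have htr := congrArg (LinearMap.trace F M) hch
      rw [Polynomial.aeval_eq_sum_range, map_sum, map_zero] at htr
      have hsum : ∀ i ∈ Finset.range (f.charpoly.natDegree + 1), i ≠ 0 →
          LinearMap.trace F M (f.charpoly.coeff i • f ^ i) = 0 := by
        intro i _ hi
        rw [map_smul, hf i (Nat.one_le_iff_ne_zero.mpr hi), smul_zero]
      rw [Finset.sum_eq_single 0 hsum (by simp)] at htr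
      rw [map_smul, pow_zero, LinearMap.trace_one, smul_eq_mul] at htr
      have : (Module.finrank F M : F) ≠ 0 := by
        exact_mod_cast Nat.pos_iff_ne_zero.mp hpos
      exact (mul_eq_zero.mp htr).resolve_right this
    have hker : ∃ m : M, m ≠ 0 ∧ f m = 0 := by
      rw [← f.charpoly_constantCoeff_eq_zero_iff]
      simpa [Polynomial.constantCoeff_apply] using hc0
    obtain ⟨m, hm0, hfm⟩ := hker
    set N := LinearMap.range f with hN
    have hrank : Module.finrank F N ≤ n := by
      have h1 : 0 < Module.finrank F (LinearMap.ker f) := by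
        have : Nontrivial (LinearMap.ker f) :=
          ⟨⟨⟨m, by simpa [LinearMap.mem_ker] using hfm⟩, 0, by simpa using hm0⟩⟩
        exact Module.finrank_pos
      have h2 := LinearMap.finrank_range_add_finrank_ker f
      have h3 : Module.finrank F N = Module.finrank F (LinearMap.range f) := rfl
      omega
    set c : M →ₗ[F] N := f.rangeRestrict with hc
    set s : N →ₗ[F] M := N.subtype with hs
    have hsc : s ∘ₗ c = f := by ext x; rfl
    set u : Module.End F N := c ∘ₗ s with hu
    -- key identity
    have key : ∀ k : ℕ, u ^ (k + 1) = c ∘ₗ (f ^ k) ∘ₗ s := by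
      intro k
      induction k with
      | zero => show u ^ 1 = c ∘ₗ 1 ∘ₗ s; rw [pow_one, hu]; ext x; simp
      | succ k ihk =>
        have : u ^ (k + 2) = u ^ (k + 1) * u := by rw [pow_succ]
        rw [this, ihk]
        show (c ∘ₗ (f ^ k) ∘ₗ s) ∘ₗ (c ∘ₗ s) = c ∘ₗ (f ^ (k+1)) ∘ₗ s
        have : f ^ (k + 1) = (f ^ k) ∘ₗ f := by rw [pow_succ]; rfl
        rw [this, ← hsc]
        ext x
        simp [LinearMap.comp_apply]
    have hutr : ∀ k, 1 ≤ k → LinearMap.trace F N (u ^ k) = 0 := by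
      intro k hk
      obtain ⟨j, rfl⟩ := Nat.exists_eq_add_of_le hk
      rw [add_comm, key j, LinearMap.trace_comp_comm' ((f ^ j) ∘ₗ s) c]
      have : ((f ^ j) ∘ₗ s) ∘ₗ c = f ^ (j + 1) := by
        rw [LinearMap.comp_assoc, hsc, pow_succ]; rfl
      rw [this]
      exact hf _ (by omega)
    obtain ⟨m', hm'⟩ := ih hrank u hutr
    refine ⟨m' + 2, ?_⟩
    have : f ^ (m' + 2) = s ∘ₗ (u ^ (m' + 1)) ∘ₗ c := by
      rw [key m']
      have h1 : f ^ (m' + 2) = f ∘ₗ (f ^ m') ∘ₗ f := by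
        rw [pow_succ, pow_succ']; rfl
      rw [h1, ← hsc]
      ext x; simp [LinearMap.comp_apply]
    rw [this]
    have hum : u ^ (m' + 1) = 0 := by
      rcases Nat.lt_or_ge m' (m' + 1) with h | h
      · calc u ^ (m' + 1) = u ^ m' * u := by rw [pow_succ]
          _ = 0 := by rw [hm', zero_mul]
      · omega
    rw [hum]
    ext x; simp

/-- Let `B` be a finite dimensional associative algebra over a field `F` of characteristic
zero, and let `L` be a Lie algebra acting on `B` by derivations. If `B` is `L`-simple
(`B² ≠ 0` and the only two-sided ideals invariant under the `L`-action are `⊥` and `⊤`),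
then `B` is simple as an associative algebra (`B² ≠ 0` and its only two-sided ideals are
`⊥` and `⊤`). -/
theorem L_simple_implies_simple (F : Type*) (B : Type*) (L : Type*) [Field F] [CharZero F]
    [Ring B] [Algebra F B] [FiniteDimensional F B] [LieRing L] [LieAlgebra F L]
    (ρ : L →ₗ⁅F⁆ Module.End F B)
    (hder : ∀ l : L, ∀ x y : B, ρ l (x * y) = ρ l x * y + x * ρ l y)
    (hsq : ∃ x y : B, x * y ≠ 0)
    (hLsimple : ∀ I : TwoSidedIdeal B, (∀ l : L, ∀ x ∈ I, ρ l x ∈ I) → I = ⊥ ∨ I = ⊤) :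
    ∀ I : TwoSidedIdeal B, I = ⊥ ∨ I = ⊤ := by
  have hnontriv : Nontrivial B := by
    obtain ⟨x, y, hxy⟩ := hsq
    exact nontrivial_of_ne (x * y) 0 hxy
  set lm : B →ₐ[F] Module.End F B := Algebra.lmul F B with hlm
  set T : B → F := fun z => LinearMap.trace F B (lm z) with hT
  have hTadd : ∀ a b : B, T (a + b) = T a + T b := by intro a b; simp [hT]
  have hTneg : ∀ a : B, T (-a) = - T a := by intro a; simp [hT]
  have hTzero : T 0 = 0 := by simp [hT]
  have hTcomm : ∀ x y : B, T (x * y) = T (y * x) := by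
    intro x y
    simp only [hT, map_mul]
    exact LinearMap.trace_mul_comm F (lm x) (lm y)
  have hTnil : ∀ z : B, IsNilpotent z → T z = 0 := by
    intro z hz
    have h1 : IsNilpotent (lm z) := hz.map lm
    have h2 := LinearMap.isNilpotent_trace_of_isNilpotent h1
    exact h2.eq_zero
  have hTone : T 1 = (Module.finrank F B : F) := by
    simp only [hT, map_one]
    exact LinearMap.trace_one F B
  have hfinrank : (Module.finrank F B : F) ≠ 0 := by
    have : 0 < Module.finrank F B := Module.finrank_pos
    exact_mod_cast Nat.pos_iff_ne_zero.mp this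
  -- derivation identity
  have hlmd : ∀ (l : L) (x : B), lm (ρ l x) = ρ l * lm x - lm x * ρ l := by
    intro l x
    ext b
    show ρ l x * b = ρ l (x * b) - x * ρ l b
    rw [hder l x b]; noncomm_ring
  have hTd : ∀ (l : L) (x y : B), T (ρ l x * y) = - T (x * ρ l y) := by
    intro l x y
    have key : T (ρ l x * y) + T (x * ρ l y) = 0 := by
      have h1 : lm (ρ l x * y) = (ρ l * lm x - lm x * ρ l) * lm y := by
        rw [map_mul, hlmd]
      have h2 : lm (x * ρ l y) = lm x * (ρ l * lm y - lm y * ρ l) := by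
        rw [map_mul, hlmd]
      simp only [hT, h1, h2]
      have : (ρ l * lm x - lm x * ρ l) * lm y + lm x * (ρ l * lm y - lm y * ρ l)
          = ρ l * (lm x * lm y) - (lm x * lm y) * ρ l := by noncomm_ring
      rw [← map_add, this, map_sub, LinearMap.trace_mul_comm, sub_self]
    linear_combination key
  -- the radical of the trace form is an L-invariant two-sided ideal
  set Rc : Set B := {x : B | ∀ y : B, T (x * y) = 0} with hRc
  have hRzero : (0 : B) ∈ Rc := by intro y; rw [zero_mul]; exact hTzero
  have hRadd : ∀ {a b : B}, a ∈ Rc → b ∈ Rc → a + b ∈ Rc := by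
    intro a b ha hb y; rw [add_mul, hTadd, ha y, hb y, add_zero]
  have hRneg : ∀ {a : B}, a ∈ Rc → -a ∈ Rc := by
    intro a ha y; rw [neg_mul, hTneg, ha y, neg_zero]
  have hRml : ∀ {x y : B}, y ∈ Rc → x * y ∈ Rc := by
    intro x y hy z
    rw [mul_assoc, hTcomm, mul_assoc]
    exact hy (z * x)
  have hRmr : ∀ {x y : B}, x ∈ Rc → x * y ∈ Rc := by
    intro x y hx z; rw [mul_assoc]; exact hx (y * z)
  set R : TwoSidedIdeal B := TwoSidedIdeal.mk' Rc hRzero hRadd hRneg hRml hRmr with hR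
  have hRmem : ∀ x : B, x ∈ R ↔ ∀ y : B, T (x * y) = 0 := fun x =>
    TwoSidedIdeal.mem_mk' Rc hRzero hRadd hRneg hRml hRmr x
  have hRbot : R = ⊥ := by
    rcases hLsimple R (by
      intro l x hx
      rw [hRmem] at hx ⊢
      intro y
      rw [hTd l x y, hx (ρ l y), neg_zero]) with h | h
    · exact h
    · exfalso
      have h1 : (1 : B) ∈ R := by rw [h]; exact TwoSidedIdeal.mem_top B
      have := (hRmem 1).mp h1 1
      rw [one_mul, hTone] at this
      exact hfinrank this
  have hnondeg : ∀ x : B, (∀ y : B, T (x * y) = 0) → x = 0 := by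
    intro x hx
    have : x ∈ R := (hRmem x).mpr hx
    rwa [hRbot, TwoSidedIdeal.mem_bot] at this
  -- main argument
  intro I
  -- elements of I orthogonal to I are nilpotent
  have hnilIP : ∀ x : B, x ∈ I → (∀ j ∈ I, T (x * j) = 0) → IsNilpotent x := by
    intro x hxI hxO
    have hpow1 : ∀ j : ℕ, x ^ (j + 1) ∈ I := by
      intro j
      induction j with
      | zero => rwa [pow_one]
      | succ j ihj =>
        rw [pow_succ]
        exact I.mul_mem_right _ _ ihj
    have hpowI : ∀ k : ℕ, 1 ≤ k → x ^ k ∈ I := by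
      intro k hk
      obtain ⟨j, rfl⟩ := Nat.exists_eq_add_of_le hk
      rw [add_comm]
      exact hpow1 j
    have hnil2 : IsNilpotent (lm (x * x)) := by
      apply aux_nilpotent_of_trace_pow (Module.finrank F B) le_rfl
      intro k hk
      rw [← map_pow]
      show T ((x * x) ^ k) = 0
      have h1 : (x * x) ^ k = x * x ^ (2 * k - 1) := by
        have h2k : 2 * k = (2 * k - 1) + 1 := by omega
        calc (x * x) ^ k = x ^ (2 * k) := by rw [← sq, ← pow_mul]
          _ = x ^ ((2 * k - 1) + 1) := by rw [← h2k]
          _ = x * x ^ (2 * k - 1) := pow_succ' x _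
      rw [h1]
      exact hxO _ (hpowI _ (by omega))
    obtain ⟨n, hn⟩ := hnil2
    refine ⟨2 * n, ?_⟩
    have h3 : (x * x) ^ n = 0 := Algebra.lmul_injective (R := F) (by rw [map_pow, hn, map_zero])
    rw [pow_mul, sq]
    exact h3
  -- the trace bilinear form
  set τ : LinearMap.BilinForm F B := LinearMap.mk₂ F (fun x y => T (x * y))
    (fun a b y => by show T ((a + b) * y) = T (a * y) + T (b * y); rw [add_mul]; exact hTadd _ _)
    (fun c a y => by
      show T ((c • a) * y) = c • T (a * y)
      rw [smul_mul_assoc, hT, smul_eq_mul]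
      simp [map_smul])
    (fun a b c => by show T (a * (b + c)) = T (a * b) + T (a * c); rw [mul_add]; exact hTadd _ _)
    (fun c a y => by
      show T (a * (c • y)) = c • T (a * y)
      rw [mul_smul_comm, hT, smul_eq_mul]
      simp [map_smul]) with hτ
  have hτapp : ∀ x y : B, τ x y = T (x * y) := fun x y => rfl
  have hsymm : τ.IsSymm := by
    refine ⟨fun x y => ?_⟩
    simp only [RingHom.id_apply, hτapp]
    exact hTcomm x y
  have hrefl : τ.IsRefl := hsymm.isRefl
  -- I as a submodule
  set W : Submodule F B := Submodule.restrictScalars F (TwoSidedIdeal.asIdeal I) with hW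
  have hWmem : ∀ x : B, x ∈ W ↔ x ∈ I := by
    intro x
    rw [hW, Submodule.restrictScalars_mem]
    exact TwoSidedIdeal.mem_asIdeal
  set Wo : Submodule F B := τ.orthogonal W with hWo
  have hWomem : ∀ x : B, x ∈ Wo ↔ ∀ j ∈ I, T (x * j) = 0 := by
    intro x
    rw [hWo, LinearMap.BilinForm.mem_orthogonal_iff]
    constructor
    · intro h j hj
      have := h j ((hWmem j).mpr hj)
      rw [hτapp] at this
      rw [hTcomm]; exact this
    · intro h j hj
      rw [hτapp, hTcomm]
      exact h j ((hWmem j).mp hj)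
  -- elements in both are zero
  have hzero : ∀ z : B, z ∈ I → (∀ j ∈ I, T (z * j) = 0) → z = 0 := by
    intro z hzI hzO
    apply hnondeg
    intro y
    apply hTnil
    apply hnilIP (z * y)
    · exact I.mul_mem_right _ _ hzI
    · intro j hj
      rw [mul_assoc]
      exact hzO _ (I.mul_mem_left _ _ hj)
  have hdisj : Disjoint W Wo := by
    rw [Submodule.disjoint_def]
    intro z hzW hzWo
    exact hzero z ((hWmem z).mp hzW) ((hWomem z).mp hzWo)
  have hcompl : IsCompl W Wo :=
    (LinearMap.BilinForm.isCompl_orthogonal_iff_disjoint hrefl).mpr hdisj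
  have htop : W ⊔ Wo = ⊤ := codisjoint_iff.mp hcompl.codisjoint
  obtain ⟨e, he, f₂, hf₂, hef⟩ := Submodule.mem_sup.mp
    (show (1 : B) ∈ W ⊔ Wo by rw [htop]; exact Submodule.mem_top)
  have heI : e ∈ I := (hWmem e).mp he
  have hf₂O : ∀ j ∈ I, T (f₂ * j) = 0 := (hWomem f₂).mp hf₂
  -- products of I with Wo elements vanish
  have ha_b : ∀ a ∈ I, a * f₂ = 0 := by
    intro a ha
    apply hzero (a * f₂) (I.mul_mem_right _ _ ha)
    intro j hj
    rw [mul_assoc, hTcomm, mul_assoc]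
    exact hf₂O _ (I.mul_mem_right _ _ hj)
  have hb_a : ∀ a ∈ I, f₂ * a = 0 := by
    intro a ha
    apply hzero (f₂ * a) (I.mul_mem_left _ _ ha)
    intro j hj
    rw [mul_assoc]
    exact hf₂O _ (I.mul_mem_right _ _ ha)
  have hef0 : e * f₂ = 0 := ha_b e heI
  have hee : e * e = e := by
    calc e * e = e * e + e * f₂ := by rw [hef0, add_zero]
      _ = e * (e + f₂) := by rw [mul_add]
      _ = e := by rw [hef, mul_one]
  have hcen : ∀ b : B, e * b = b * e := by
    intro b
    have h1 : e * b * f₂ = 0 := ha_b (e * b) (I.mul_mem_right _ _ heI)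
    have h2 : f₂ * (b * e) = 0 := hb_a (b * e) (I.mul_mem_left _ _ heI)
    have hA : e * b = e * (b * e) := by
      calc e * b = e * b * 1 := by rw [mul_one]
        _ = e * b * (e + f₂) := by rw [hef]
        _ = e * b * e + e * b * f₂ := by rw [mul_add]
        _ = e * (b * e) := by rw [h1, add_zero, mul_assoc]
    have hB : b * e = e * (b * e) := by
      calc b * e = 1 * (b * e) := by rw [one_mul]
        _ = (e + f₂) * (b * e) := by rw [hef]
        _ = e * (b * e) + f₂ * (b * e) := by rw [add_mul]
        _ = e * (b * e) := by rw [h2, add_zero]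
    rw [hA, ← hB]
  have heX : ∀ x ∈ I, e * x = x := by
    intro x hx
    have h2 : f₂ * x = 0 := hb_a x hx
    calc e * x = e * x + f₂ * x := by rw [h2, add_zero]
      _ = (e + f₂) * x := by rw [add_mul]
      _ = x := by rw [hef, one_mul]
  have hde : ∀ l : L, ρ l e = 0 := by
    intro l
    have hcen_d : ∀ b : B, ρ l e * b = b * ρ l e := by
      intro b
      have h3 : ρ l (e * b) = ρ l (b * e) := by rw [hcen b]
      rw [hder l e b, hder l b e] at h3
      rw [hcen (ρ l b)] at h3
      rw [add_comm (ρ l b * e) (b * ρ l e)] at h3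
      exact add_right_cancel h3
    have h6 : ρ l e = e * ρ l e + e * ρ l e := by
      calc ρ l e = ρ l (e * e) := by rw [hee]
        _ = ρ l e * e + e * ρ l e := hder l e e
        _ = e * ρ l e + e * ρ l e := by rw [hcen_d e]
    have h7 : e * ρ l e = 0 := by
      have h8 : e * ρ l e = e * ρ l e + e * ρ l e := by
        conv_lhs => rw [h6]
        rw [mul_add, ← mul_assoc, hee]
      have h9 : e * ρ l e + 0 = e * ρ l e + e * ρ l e := by rw [add_zero]; exact h8
      exact (add_left_cancel h9).symm
    rw [h6, h7, add_zero]
  apply hLsimple I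
  intro l x hx
  have h1 : ρ l x = e * ρ l x := by
    calc ρ l x = ρ l (e * x) := by rw [heX x hx]
      _ = ρ l e * x + e * ρ l x := hder l e x
      _ = e * ρ l x := by rw [hde l, zero_mul, zero_add]
  rw [h1]
  exact I.mul_mem_right _ _ heI
end

section
/- Let $F$ be a field of characteristic zero, $A$ a finite dimensional associative algebra over $F$ with Jacobson radical $J$, and suppose the semisimple quotient decomposes as $A/J = A_1 \oplus \cdots \oplus A_l$ with each $A_i \cong F$ one-dimensional, lifted to orthogonal idempotents with $A_i A_k = A_i J A_k = \{0\}$ for all $i \neq k$. Then, setting $B_i = A_i + J$, any multilinear polynomial $f$ that vanishes on every $B_i$ and on $J$ also vanishes on $A$. -/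
/-- A multilinear map vanishing on a spanning set vanishes everywhere. -/
lemma multilinear_vanish_of_span {F A : Type*} [Field F] [Ring A] [Algebra F A] {t : ℕ}
    (S : Set A) (hS : ∀ x : A, x ∈ Submodule.span F S)
    (g : MultilinearMap F (fun _ : Fin t => A) A)
    (h0 : ∀ a : Fin t → A, (∀ r, a r ∈ S) → g a = 0) :
    ∀ a : Fin t → A, g a = 0 := by
  have key : ∀ k : ℕ, ∀ a : Fin t → A, (∀ r : Fin t, k ≤ (r : ℕ) → a r ∈ S) → g a = 0 := by
    intro k
    induction k with
    | zero => intro a ha; exact h0 a fun r => ha r (Nat.zero_le _)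
    | succ k ih =>
      intro a ha
      by_cases hk : k < t
      · set p : Fin t := ⟨k, hk⟩ with hp
        have main : ∀ x : A, x ∈ Submodule.span F S → g (Function.update a p x) = 0 := by
          intro x hx
          induction hx using Submodule.span_induction with
          | mem y hy =>
            apply ih
            intro r hr
            rcases eq_or_ne r p with rfl | hrp
            · simpa using hy
            · rw [Function.update_of_ne hrp]
              apply ha
              have : (r : ℕ) ≠ k := by
                intro h; apply hrp; apply Fin.ext; simpa [hp] using h
              omega
          | zero => exact g.map_update_zero a p
          | add y z _ _ hy hz => rw [g.map_update_add, hy, hz, add_zero]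
          | smul d y _ hy => rw [g.map_update_smul, hy, smul_zero]
        have := main (a p) (hS _)
        simpa [Function.update_eq_self] using this
      · exact ih a fun r hr => absurd r.isLt (by omega)
  intro a
  exact key t a fun r hr => absurd r.isLt (by omega)

/-- Let `A` be a finite dimensional algebra over a field `F` of characteristic zero with
Jacobson radical `J`, and suppose the semisimple part is spanned by nonzero orthogonal
idempotents `e 1, …, e l` (each component `Aᵢ = F·(e i)` one-dimensional), with
`Aᵢ A_k = Aᵢ J A_k = 0` for `i ≠ k`, and `A = A₁ ⊕ ⋯ ⊕ A_l + J`. Then any multilinear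
polynomial `f = ∑_σ c_σ x_{σ(1)} ⋯ x_{σ(t)}` which vanishes on every `Bᵢ = Aᵢ + J`
(and hence on `J`) vanishes on all of `A`. -/
theorem multilinear_identity_from_components (F : Type*) (A : Type*) [Field F] [CharZero F]
    [Ring A] [Algebra F A] [FiniteDimensional F A]
    (J : Submodule F A)
    (hJ : J = ((⊥ : TwoSidedIdeal A).jacobson.asIdeal).restrictScalars F)
    (l : ℕ) (e : Fin l → A)
    (hidem : ∀ i, e i * e i = e i) (hne : ∀ i, e i ≠ 0)
    (horth : ∀ i k, i ≠ k → e i * e k = 0)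
    (horthJ : ∀ i k, i ≠ k → ∀ j ∈ J, e i * j * e k = 0)
    (hspan : ∀ a : A, a ∈ Submodule.span F (Set.range e) ⊔ J)
    (t : ℕ) (c : Equiv.Perm (Fin t) → F)
    (hvanish : ∀ i : Fin l, ∀ a : Fin t → A,
      (∀ r, a r ∈ Submodule.span F {e i} ⊔ J) →
      ∑ σ : Equiv.Perm (Fin t), c σ • (List.ofFn fun r => a (σ r)).prod = 0)
    (hvanishJ : ∀ a : Fin t → A, (∀ r, a r ∈ J) →
      ∑ σ : Equiv.Perm (Fin t), c σ • (List.ofFn fun r => a (σ r)).prod = 0) :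
    ∀ a : Fin t → A,
      ∑ σ : Equiv.Perm (Fin t), c σ • (List.ofFn fun r => a (σ r)).prod = 0 := by
  -- J is closed under multiplication on either side
  have JmulL : ∀ x y : A, y ∈ J → x * y ∈ J := by
    intro x y hy
    rw [hJ] at hy ⊢
    exact TwoSidedIdeal.mem_asIdeal.2 (TwoSidedIdeal.mul_mem_left _ x y (TwoSidedIdeal.mem_asIdeal.1 hy))
  have JmulR : ∀ x y : A, x ∈ J → x * y ∈ J := by
    intro x y hx
    rw [hJ] at hx ⊢
    exact TwoSidedIdeal.mem_asIdeal.2 (TwoSidedIdeal.mul_mem_right _ x y (TwoSidedIdeal.mem_asIdeal.1 hx))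
  -- e is injective
  have einj : ∀ i k, e i = e k → i = k := by
    intro i k h
    by_contra hik
    exact hne i (by rw [← hidem i, (show e i * e i = e i * e k by rw [← h]), horth i k hik])
  -- key product lemma
  have P : ∀ L : List A, (∀ x ∈ L, x ∈ J ∨ ∃ m, x = e m) →
      ∀ (i : Fin l) (w : A), (w = 1 ∨ w ∈ J) → (∃ k, k ≠ i ∧ e k ∈ L) →
      e i * w * L.prod = 0 := by
    intro L
    induction L with
    | nil => rintro _ i w _ ⟨k, _, hmem⟩; simp at hmem
    | cons x L ih =>
      rintro hmem i w hw ⟨k, hki, hkmem⟩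
      have hmem' : ∀ y ∈ L, y ∈ J ∨ ∃ m, y = e m := fun y hy => hmem y (List.mem_cons_of_mem _ hy)
      by_cases hx : ∃ m, x = e m
      · obtain ⟨m, rfl⟩ := hx
        by_cases hmi : m = i
        · subst hmi
          have hkL : e k ∈ L := by
            rcases List.mem_cons.mp hkmem with h | h
            · exact absurd (einj k m h) hki
            · exact h
          rcases hw with rfl | hwJ
          · have : e m * 1 * ((e m) :: L).prod = e m * 1 * L.prod := by
              rw [List.prod_cons, mul_one, ← mul_assoc, hidem]
            rw [this]
            exact ih hmem' m 1 (Or.inl rfl) ⟨k, hki, hkL⟩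
          · have : e m * w * ((e m) :: L).prod = e m * (w * e m) * L.prod := by
              rw [List.prod_cons]; noncomm_ring
            rw [this]
            exact ih hmem' m (w * e m) (Or.inr (JmulR w (e m) hwJ)) ⟨k, hki, hkL⟩
        · have h0 : e i * w * e m = 0 := by
            rcases hw with rfl | hwJ
            · rw [mul_one]; exact horth i m fun h => hmi h.symm
            · exact horthJ i m (fun h => hmi h.symm) w hwJ
          rw [List.prod_cons, show e i * w * (e m * L.prod) = (e i * w * e m) * L.prod by
            noncomm_ring, h0, zero_mul]
      · have hxJ : x ∈ J := (hmem x List.mem_cons_self).resolve_right hx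
        have hkL : e k ∈ L := by
          rcases List.mem_cons.mp hkmem with h | h
          · exact absurd ⟨k, h.symm⟩ hx
          · exact h
        rw [List.prod_cons, show e i * w * (x * L.prod) = e i * (w * x) * L.prod by noncomm_ring]
        have hwx : w * x ∈ J := by
          rcases hw with rfl | hwJ
          · rwa [one_mul]
          · exact JmulR w x hwJ
        exact ih hmem' i (w * x) (Or.inr hwx) ⟨k, hki, hkL⟩
  have Z : ∀ L : List A, (∀ x ∈ L, x ∈ J ∨ ∃ m, x = e m) →
      (∃ i k, i ≠ k ∧ e i ∈ L ∧ e k ∈ L) → L.prod = 0 := by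
    intro L
    induction L with
    | nil => rintro _ ⟨i, k, _, hmem, _⟩; simp at hmem
    | cons x L ih =>
      rintro hmem ⟨i, k, hik, hi, hk⟩
      have hmem' : ∀ y ∈ L, y ∈ J ∨ ∃ m, y = e m := fun y hy => hmem y (List.mem_cons_of_mem _ hy)
      rcases List.mem_cons.mp hi with hxi | hiL <;> rcases List.mem_cons.mp hk with hxk | hkL
      · exact absurd (einj i k (hxi.symm ▸ hxk ▸ rfl)) hik
      · rw [List.prod_cons, ← hxi, show e i * L.prod = e i * 1 * L.prod by rw [mul_one]]
        exact P L hmem' i 1 (Or.inl rfl) ⟨k, Ne.symm hik, hkL⟩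
      · rw [List.prod_cons, ← hxk, show e k * L.prod = e k * 1 * L.prod by rw [mul_one]]
        exact P L hmem' k 1 (Or.inl rfl) ⟨i, hik, hiL⟩
      · rw [List.prod_cons, ih hmem' ⟨i, k, hik, hiL, hkL⟩, mul_zero]
  -- the multilinear map
  set G : MultilinearMap F (fun _ : Fin t => A) A :=
    ∑ σ : Equiv.Perm (Fin t), c σ • (MultilinearMap.mkPiAlgebraFin F t A).domDomCongr σ with hGdef
  have hG : ∀ b : Fin t → A,
      G b = ∑ σ : Equiv.Perm (Fin t), c σ • (List.ofFn fun r => b (σ r)).prod := by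
    intro b
    rw [hGdef, MultilinearMap.sum_apply]
    simp [MultilinearMap.domDomCongr_apply, MultilinearMap.mkPiAlgebraFin_apply]
  intro a
  rw [← hG]
  apply multilinear_vanish_of_span ((J : Set A) ∪ Set.range e)
  · intro x
    rw [Submodule.span_union, Submodule.span_eq, sup_comm]
    exact hspan x
  · intro b hb
    rw [hG]
    have hbJ : ∀ r, b r ∈ J ∨ ∃ m, b r = e m := by
      intro r
      rcases hb r with h | ⟨m, hm⟩
      · exact Or.inl h
      · exact Or.inr ⟨m, hm.symm⟩
    by_cases hcase : ∃ i k, i ≠ k ∧ (∃ r, b r = e i) ∧ (∃ r, b r = e k)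
    · obtain ⟨i, k, hik, ⟨r1, hr1⟩, ⟨r2, hr2⟩⟩ := hcase
      apply Finset.sum_eq_zero
      intro σ _
      have : (List.ofFn fun r => b (σ r)).prod = 0 := by
        apply Z
        · intro x hx
          obtain ⟨r, rfl⟩ := List.mem_ofFn.1 hx
          exact hbJ (σ r)
        · refine ⟨i, k, hik, ?_, ?_⟩
          · exact List.mem_ofFn.2 ⟨σ⁻¹ r1, by simp [hr1]⟩
          · exact List.mem_ofFn.2 ⟨σ⁻¹ r2, by simp [hr2]⟩
      rw [this, smul_zero]
    · by_cases hany : ∃ r i, b r = e i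
      · obtain ⟨r0, i0, hr0⟩ := hany
        apply hvanish i0
        intro r
        rcases hbJ r with h | ⟨m, hm⟩
        · exact Submodule.mem_sup_right h
        · rcases eq_or_ne m i0 with rfl | hmi
          · exact Submodule.mem_sup_left (hm ▸ Submodule.subset_span rfl)
          · exact absurd ⟨m, i0, hmi, ⟨r, hm⟩, ⟨r0, hr0⟩⟩ hcase
      · apply hvanishJ
        intro r
        rcases hbJ r with h | ⟨m, hm⟩
        · exact h
        · exact absurd ⟨r, m, hm⟩ hany
end
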